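/- Let F ⊆ W be a linear subspace with F ⊆ Ŷ, and let w ∈ F satisfy f_{ww} ≠ 0. Suppose that for every v ∈ F with f_{vv} ≠ 0 one has f_{vv} ∈ ℂ·f_{ww} (i.e. the Gauss map is constant on the smooth points of F). Then for any fixed u' ∈ W with f(w,w,u') ≠ 0, the set F ∩ Sing(Ŷ) equals {v ∈ F : f(v,v,u') = 0}; in particular F ∩ Sing(Ŷ) is the zero locus in F of a single quadratic form, i.e. a hypersurface of degree at most 2 in the linear space F. -/

import Mathlib

/-- If a linear subspace `F ⊆ Ŷ` contains `w` with `f_{ww} ≠ 0` and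
the Gauss map is constant on the smooth points of `F` (i.e. `f_{vv} ∈ ℂ·f_{ww}`
whenever `v ∈ F` and `f_{vv} ≠ 0`), then for any `u'` with `f(w,w,u') ≠ 0`,
`F ∩ Sing(Ŷ) = {v ∈ F : f(v,v,u') = 0}`: a degree ≤ 2 hypersurface in `F`. -/
theorem singular_locus_in_gauss_fiber_is_quadric
    {W : Type*} [AddCommGroup W] [Module ℂ W] [FiniteDimensional ℂ W]
    (f : W →ₗ[ℂ] W →ₗ[ℂ] W →ₗ[ℂ] ℂ)
    (hsym1 : ∀ u v w : W, f u v w = f v u w)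
    (hsym2 : ∀ u v w : W, f u v w = f u w v)
    (F : Submodule ℂ W) (hF : ∀ v ∈ F, f v v v = 0)
    (w : W) (hwF : w ∈ F) (hww : f w w ≠ 0)
    (hconst : ∀ v ∈ F, f v v ≠ 0 → ∃ c : ℂ, f v v = c • f w w)
    (u' : W) (hu' : f w w u' ≠ 0) :
    ∀ v ∈ F, (f v v = 0 ↔ f v v u' = 0) := by
  intro v hvF
  constructor
  · intro h; rw [h]; rfl
  · intro h
    by_contra hvv
    obtain ⟨c, hc⟩ := hconst v hvF hvv
    have hc' : f v v u' = c * f w w u' := by rw [hc]; rfl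
    have : c = 0 := by
      field_simp [h] at hc'
      rw [h] at hc'
      exact (mul_eq_zero.mp hc'.symm).resolve_right hu'
    rw [this, zero_smul] at hc
    exact hvv hc
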